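/- Rank-one domination criterion: Let Y and Z be finite-dimensional complex vector spaces, let v ∈ Y⊗Z be any vector, and let Z ∈ L(Z) be a positive definite operator. Then 1_Y ⊗ Z ≥ v v* (in the Loewner order) if and only if ⟨Tr_Y(v v*), Z⁻¹⟩ ≤ 1, where ⟨A,B⟩ = Tr(A*B) and Tr_Y denotes the partial trace over Y. -/

import Mathlib

open Matrix
open scoped Kronecker ComplexOrder

noncomputable section

/-- The trace norm `‖A‖₁ = Tr √(A* A)`. -/
def traceNorm {m n : Type*} [Fintype m] [Fintype n] [DecidableEq n]
    (A : Matrix m n ℂ) : ℝ :=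
  ((Matrix.posSemidef_conjTranspose_mul_self A).1.eigenvectorUnitary.1 *
    Matrix.diagonal ((fun x : ℝ => (x : ℂ)) ∘ Real.sqrt ∘ (Matrix.posSemidef_conjTranspose_mul_self A).1.eigenvalues) *
    (star (Matrix.posSemidef_conjTranspose_mul_self A).1.eigenvectorUnitary : Matrix n n ℂ)).trace.re

/-- The spectral norm (operator norm w.r.t. Euclidean norms). -/
def specNorm {m n : Type*} [Fintype m] [Fintype n] [DecidableEq n]
    (A : Matrix m n ℂ) : ℝ :=
  ‖LinearMap.toContinuousLinearMap (Matrix.toEuclideanLin A)‖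

/-- The Frobenius norm `‖A‖₂ = √Tr(A*A)`. -/
def frobeniusNorm {m n : Type*} [Fintype m] [Fintype n] (A : Matrix m n ℂ) : ℝ :=
  Real.sqrt ((Aᴴ * A).trace.re)

/-- Partial trace over the first tensor factor. -/
def ptraceFst {y z : Type*} [Fintype y] (M : Matrix (y × z) (y × z) ℂ) : Matrix z z ℂ :=
  Matrix.of fun a b => ∑ i, M (i, a) (i, b)

/-- Partial trace over the second tensor factor. -/
def ptraceSnd {y z : Type*} [Fintype z] (M : Matrix (y × z) (y × z) ℂ) : Matrix y y ℂ :=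
  Matrix.of fun i j => ∑ a, M (i, a) (j, a)

/-- The super-operator `Φ ⊗ 1_{L(W)}`, for `Φ : L(X) → L(Y)` and `W` indexed by `k`. -/
def tensorId {n m : Type*} [Fintype n] [Fintype m] (k : Type*) [Fintype k]
    (Φ : Matrix n n ℂ →ₗ[ℂ] Matrix m m ℂ) :
    Matrix (n × k) (n × k) ℂ →ₗ[ℂ] Matrix (m × k) (m × k) ℂ where
  toFun M := Matrix.of fun p q => Φ (Matrix.of fun i j => M (i, p.2) (j, q.2)) p.1 q.1
  map_add' M N := by
    ext p q
    show Φ (Matrix.of fun i j => (M + N) (i, p.2) (j, q.2)) p.1 q.1 =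
      Φ (Matrix.of fun i j => M (i, p.2) (j, q.2)) p.1 q.1 +
        Φ (Matrix.of fun i j => N (i, p.2) (j, q.2)) p.1 q.1
    have h : (Matrix.of fun i j => (M + N) (i, p.2) (j, q.2)) =
        (Matrix.of fun i j => M (i, p.2) (j, q.2)) +
          (Matrix.of fun i j => N (i, p.2) (j, q.2)) := rfl
    rw [h, map_add]; rfl
  map_smul' c M := by
    ext p q
    show Φ (Matrix.of fun i j => (c • M) (i, p.2) (j, q.2)) p.1 q.1 =
      (c • Φ (Matrix.of fun i j => M (i, p.2) (j, q.2))) p.1 q.1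
    have h : (Matrix.of fun i j => (c • M) (i, p.2) (j, q.2)) =
        c • (Matrix.of fun i j => M (i, p.2) (j, q.2)) := rfl
    rw [h, _root_.map_smul]

/-- The trace norm induced on super-operators. -/
def inducedTraceNorm {a b : Type*} [Fintype a] [DecidableEq a] [Fintype b] [DecidableEq b]
    (Φ : Matrix a a ℂ →ₗ[ℂ] Matrix b b ℂ) : ℝ :=
  sSup {x : ℝ | ∃ X : Matrix a a ℂ, traceNorm X ≤ 1 ∧ x = traceNorm (Φ X)}

/-- The completely bounded trace norm (diamond norm):
`sup over k ≥ 1 of ‖Φ ⊗ 1_{L(ℂᵏ)}‖₁`. -/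
def diamondNorm {n m : Type*} [Fintype n] [DecidableEq n] [Fintype m] [DecidableEq m]
    (Φ : Matrix n n ℂ →ₗ[ℂ] Matrix m m ℂ) : ℝ :=
  ⨆ k : ℕ, inducedTraceNorm (tensorId (Fin (k + 1)) Φ)


/-- Choi–Jamiołkowski representation `J(Φ) = Σ_{i,j} Φ(E_{i,j}) ⊗ E_{i,j}`. -/
def choi {n m : Type*} [Fintype n] [DecidableEq n] [Fintype m]
    (Φ : Matrix n n ℂ →ₗ[ℂ] Matrix m m ℂ) : Matrix (m × n) (m × n) ℂ :=
  ∑ i : n, ∑ j : n, (Φ (Matrix.single i j 1)) ⊗ₖ (Matrix.single i j 1)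

/-- A quantum channel: a completely positive and trace-preserving super-operator. -/
def IsQuantumChannel {n m : Type*} [Fintype n] [Fintype m]
    (Φ : Matrix n n ℂ →ₗ[ℂ] Matrix m m ℂ) : Prop :=
  (∀ (k : ℕ) (P : Matrix (n × Fin k) (n × Fin k) ℂ), P.PosSemidef →
      (tensorId (Fin k) Φ P).PosSemidef) ∧
    ∀ X : Matrix n n ℂ, (Φ X).trace = X.trace

open Classical in
/-- Square root of a positive semidefinite matrix (junk value `0` otherwise). -/
def matSqrt {r : Type*} [Fintype r] [DecidableEq r] (P : Matrix r r ℂ) : Matrix r r ℂ :=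
  if h : P.PosSemidef then
    h.1.eigenvectorUnitary.1 * Matrix.diagonal ((fun x : ℝ => (x : ℂ)) ∘ Real.sqrt ∘ h.1.eigenvalues) *
      (star h.1.eigenvectorUnitary : Matrix r r ℂ) else 0

/-- The fidelity `F(P,Q) = ‖√P √Q‖₁`. -/
def fidelity {r : Type*} [Fintype r] [DecidableEq r] (P Q : Matrix r r ℂ) : ℝ :=
  traceNorm (matSqrt P * matSqrt Q)


lemma myCS {n : Type*} [Fintype n] (w x : n → ℂ) :
    Complex.normSq (star w ⬝ᵥ x) ≤ (star w ⬝ᵥ w).re * (star x ⬝ᵥ x).re := by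
  have h := norm_inner_le_norm (𝕜 := ℂ) ((WithLp.equiv 2 (n → ℂ)).symm w)
    ((WithLp.equiv 2 (n → ℂ)).symm x)
  have e : ∀ a b : n → ℂ, inner ℂ ((WithLp.equiv 2 (n → ℂ)).symm a)
      ((WithLp.equiv 2 (n → ℂ)).symm b) = star a ⬝ᵥ b := fun a b => by
    rw [dotProduct_comm]; rfl
  rw [e] at h
  have hw : (star w ⬝ᵥ w).re = ‖(WithLp.equiv 2 (n → ℂ)).symm w‖ ^ 2 := by
    rw [← e, ← inner_self_eq_norm_sq (𝕜 := ℂ)]; rfl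
  have hx : (star x ⬝ᵥ x).re = ‖(WithLp.equiv 2 (n → ℂ)).symm x‖ ^ 2 := by
    rw [← e, ← inner_self_eq_norm_sq (𝕜 := ℂ)]; rfl
  have : Complex.normSq (star w ⬝ᵥ x) = ‖star w ⬝ᵥ x‖ ^ 2 := by
    rw [← Complex.sq_norm]
  rw [this, hw, hx]
  calc ‖star w ⬝ᵥ x‖ ^ 2 ≤ (‖(WithLp.equiv 2 (n → ℂ)).symm w‖ * ‖(WithLp.equiv 2 (n → ℂ)).symm x‖) ^ 2 := by
        apply pow_le_pow_left₀ (norm_nonneg _) h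
    _ = _ := by ring

lemma vecMulVec_mulVec' {n : Type*} [Fintype n] (a b x : n → ℂ) :
    vecMulVec a b *ᵥ x = (b ⬝ᵥ x) • a := by
  ext i
  simp [mulVec, dotProduct, vecMulVec_apply, Finset.mul_sum, mul_assoc, mul_comm, mul_left_comm]

lemma dotSelf_re_nonneg {n : Type*} [Fintype n] (x : n → ℂ) : 0 ≤ (star x ⬝ᵥ x).re := by
  have : (0:ℂ) ≤ star x ⬝ᵥ x := dotProduct_star_self_nonneg x
  exact (Complex.le_def.mp this).1

lemma dotSelf_im_zero {n : Type*} [Fintype n] (x : n → ℂ) : (star x ⬝ᵥ x).im = 0 := by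
  have : (0:ℂ) ≤ star x ⬝ᵥ x := dotProduct_star_self_nonneg x
  exact ((Complex.le_def.mp this).2).symm

lemma star_dot_comm {n : Type*} [Fintype n] (w x : n → ℂ) :
    star x ⬝ᵥ w = starRingEnd ℂ (star w ⬝ᵥ x) := by
  simp [dotProduct, map_sum, mul_comm]

lemma one_sub_vecMulVec_posSemidef_iff {n : Type*} [Fintype n] [DecidableEq n] (w : n → ℂ) :
    ((1 : Matrix n n ℂ) - vecMulVec w (star w)).PosSemidef ↔ (star w ⬝ᵥ w).re ≤ 1 := by
  have hwre := dotSelf_re_nonneg w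
  have hwim := dotSelf_im_zero w
  constructor
  · intro h
    have h2 := h.dotProduct_mulVec_nonneg w
    rw [sub_mulVec, one_mulVec, vecMulVec_mulVec', dotProduct_sub, dotProduct_smul] at h2
    have := (Complex.le_def.mp h2).1
    simp only [Complex.zero_re, Complex.sub_re, Complex.mul_re, smul_eq_mul, hwim] at this
    nlinarith
  · intro ht
    refine PosSemidef.of_dotProduct_mulVec_nonneg ?_ ?_
    · have h1 : (vecMulVec w (star w)).IsHermitian := by
        ext i j
        simp [vecMulVec_apply, conjTranspose_apply, mul_comm]
      exact (Matrix.isHermitian_one).sub h1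
    · intro x
      rw [sub_mulVec, one_mulVec, vecMulVec_mulVec', dotProduct_sub, dotProduct_smul]
      rw [star_dot_comm w x]
      have hxre := dotSelf_re_nonneg x
      have hxim := dotSelf_im_zero x
      have hcs := myCS w x
      have hE : star x ⬝ᵥ x - (star w ⬝ᵥ x) • (starRingEnd ℂ) (star w ⬝ᵥ x)
          = star x ⬝ᵥ x - (Complex.normSq (star w ⬝ᵥ x) : ℂ) := by
        rw [smul_eq_mul, mul_comm, ← Complex.normSq_eq_conj_mul_self]
      rw [hE, Complex.le_def]
      refine ⟨?_, ?_⟩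
      · simp only [Complex.zero_re, Complex.sub_re, Complex.ofReal_re]
        nlinarith
      · simp [Complex.sub_im, hxim]

lemma mul_vecMulVec {n : Type*} [Fintype n] (S : Matrix n n ℂ) (a b : n → ℂ) :
    S * vecMulVec a b = vecMulVec (S *ᵥ a) b := by
  ext i j
  simp only [mul_apply, vecMulVec_apply, mulVec, dotProduct, of_apply, Finset.sum_mul]
  apply Finset.sum_congr rfl
  intro k _
  ring

lemma vecMulVec_mul {n : Type*} [Fintype n] (S : Matrix n n ℂ) (a b : n → ℂ) :
    vecMulVec a b * S = vecMulVec a (b ᵥ* S) := by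
  ext i j
  simp [mul_apply, vecMulVec_apply, vecMul, dotProduct, Finset.mul_sum, mul_assoc, mul_comm, mul_left_comm]

open scoped MatrixOrder in
lemma key_rank_one {n : Type*} [Fintype n] [DecidableEq n] {A : Matrix n n ℂ} (hA : A.PosDef)
    (v : n → ℂ) :
    (A - vecMulVec v (star v)).PosSemidef ↔ (star v ⬝ᵥ A⁻¹ *ᵥ v).re ≤ 1 := by
  have hS : (CFC.sqrt A).PosSemidef := by
    exact (CFC.sqrt_nonneg A).posSemidef
  set S := CFC.sqrt A with hSdef
  have hSS : S * S = A := by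
    exact CFC.sqrt_mul_sqrt_self A hA.posSemidef.nonneg
  have hdetA : A.det ≠ 0 := ne_of_gt hA.det_pos
  have hSdet : IsUnit S.det := by
    rw [isUnit_iff_ne_zero]
    intro h0
    rw [← hSS, det_mul, h0, mul_zero] at hdetA
    exact hdetA rfl
  have hSH : Sᴴ = S := hS.isHermitian
  have hSinvH : (S⁻¹)ᴴ = S⁻¹ := by rw [conjTranspose_nonsing_inv, hSH]
  set w := S⁻¹ *ᵥ v with hw
  have hSw : S *ᵥ w = v := by
    rw [hw, mulVec_mulVec, Matrix.mul_nonsing_inv _ hSdet, one_mulVec]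
  have hstarw : star w = star v ᵥ* S⁻¹ := by
    rw [hw, star_mulVec, hSinvH]
  have hwS : star w ᵥ* S = star v := by
    rw [hstarw, vecMul_vecMul, Matrix.nonsing_inv_mul _ hSdet, vecMul_one]
  have hcong : A - vecMulVec v (star v) = S * ((1 : Matrix n n ℂ) - vecMulVec w (star w)) * Sᴴ := by
    rw [hSH, Matrix.mul_sub, Matrix.sub_mul, mul_one, hSS, _root_.mul_vecMulVec, _root_.vecMulVec_mul, hSw, hwS]
  have hdot : star w ⬝ᵥ w = star v ⬝ᵥ A⁻¹ *ᵥ v := by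
    rw [hw, hstarw, dotProduct_mulVec, dotProduct_mulVec, vecMul_vecMul, ← Matrix.mul_inv_rev,
      hSS]
  rw [hcong, ← hdot]
  constructor
  · intro h
    have h2 := h.mul_mul_conjTranspose_same (S⁻¹)
    rw [hSinvH, hSH] at h2
    have heq : S⁻¹ * (S * ((1 : Matrix n n ℂ) - vecMulVec w (star w)) * S) * S⁻¹ =
        (1 : Matrix n n ℂ) - vecMulVec w (star w) := by
      rw [← Matrix.mul_assoc, ← Matrix.mul_assoc, Matrix.nonsing_inv_mul _ hSdet, Matrix.one_mul,
        Matrix.mul_assoc, Matrix.mul_nonsing_inv _ hSdet, Matrix.mul_one]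
    rw [heq] at h2
    exact (one_sub_vecMulVec_posSemidef_iff w).mp h2
  · intro h
    exact ((one_sub_vecMulVec_posSemidef_iff w).mpr h).mul_mul_conjTranspose_same S

lemma one_kron_posDef {m r : ℕ} {Z : Matrix (Fin r) (Fin r) ℂ} (hZ : Z.PosDef) :
    ((1 : Matrix (Fin m) (Fin m) ℂ) ⊗ₖ Z).PosDef := by
  refine PosDef.of_dotProduct_mulVec_pos ?_ ?_
  · ext ⟨i, a⟩ ⟨j, b⟩
    have hZH : star (Z b a) = Z a b := congrFun (congrFun hZ.isHermitian a) b
    by_cases h : i = j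
    · subst h; simp [conjTranspose_apply, kroneckerMap_apply, one_apply, hZH]
    · simp [conjTranspose_apply, kroneckerMap_apply, one_apply, h, Ne.symm h]
  · intro x hx
    have hsum : star x ⬝ᵥ ((1 : Matrix (Fin m) (Fin m) ℂ) ⊗ₖ Z) *ᵥ x
        = ∑ i : Fin m, star (fun a => x (i, a)) ⬝ᵥ Z *ᵥ (fun a => x (i, a)) := by
      simp [dotProduct, mulVec, kroneckerMap_apply, one_apply, Fintype.sum_prod_type,
        Finset.mul_sum, Finset.sum_mul, ite_mul, mul_comm, mul_assoc, mul_left_comm]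
    rw [hsum]
    obtain ⟨⟨i0, a0⟩, hx0⟩ := Function.ne_iff.mp hx
    apply Finset.sum_pos'
    · intro i _
      exact hZ.posSemidef.dotProduct_mulVec_nonneg _
    · refine ⟨i0, Finset.mem_univ _, hZ.dotProduct_mulVec_pos ?_⟩
      intro hcon
      exact hx0 (congrFun hcon a0)

lemma one_kron_inv {m r : ℕ} {Z : Matrix (Fin r) (Fin r) ℂ} (hZ : Z.PosDef) :
    ((1 : Matrix (Fin m) (Fin m) ℂ) ⊗ₖ Z)⁻¹ = (1 : Matrix (Fin m) (Fin m) ℂ) ⊗ₖ Z⁻¹ := by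
  apply Matrix.inv_eq_right_inv
  rw [← Matrix.mul_kronecker_mul, Matrix.mul_nonsing_inv _ (isUnit_iff_ne_zero.mpr
    (ne_of_gt hZ.det_pos)), Matrix.one_mul, Matrix.one_kronecker_one]

lemma trace_ptrace_eq {m r : ℕ} (v : Fin m × Fin r → ℂ) (B : Matrix (Fin r) (Fin r) ℂ) :
    ((ptraceFst (vecMulVec v (star v)))ᴴ * B).trace
      = star v ⬝ᵥ ((1 : Matrix (Fin m) (Fin m) ℂ) ⊗ₖ B) *ᵥ v := by
  simp [Matrix.trace, Matrix.diag, mul_apply, conjTranspose_apply, ptraceFst,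
    vecMulVec_apply, dotProduct, mulVec, kroneckerMap_apply, one_apply,
    Fintype.sum_prod_type, Finset.mul_sum, Finset.sum_mul, ite_mul, mul_comm, mul_assoc,
    mul_left_comm]
  trans ∑ x : Fin r, ∑ i : Fin m, ∑ x1 : Fin r, B x1 x * (v (i, x) * (starRingEnd ℂ) (v (i, x1)))
  · exact Finset.sum_congr rfl fun x _ => Finset.sum_comm
  trans ∑ i : Fin m, ∑ x : Fin r, ∑ x1 : Fin r, B x1 x * (v (i, x) * (starRingEnd ℂ) (v (i, x1)))
  · exact Finset.sum_comm
  exact Finset.sum_congr rfl fun i _ => Finset.sum_comm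

/-- Rank-one domination criterion:
`1_Y ⊗ Z ≥ v v*` iff `⟨Tr_Y(v v*), Z⁻¹⟩ ≤ 1`. -/
theorem rank_one_domination {m r : ℕ} (v : Fin m × Fin r → ℂ)
    (Z : Matrix (Fin r) (Fin r) ℂ) (hZ : Z.PosDef) :
    (((1 : Matrix (Fin m) (Fin m) ℂ) ⊗ₖ Z) - vecMulVec v (star v)).PosSemidef ↔
      ((ptraceFst (vecMulVec v (star v)))ᴴ * Z⁻¹).trace.re ≤ 1 := by
  rw [key_rank_one (one_kron_posDef hZ), one_kron_inv hZ, trace_ptrace_eq v Z⁻¹]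

end
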